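/- Let H be a real Hilbert space, let E : H → ℝ be Fréchet differentiable with gradient ∇E, α-strongly convex and β-smooth, and let u* be a global minimizer of E. Fix u ∈ H with E(u) > E(u*) and ∇E(u) ≠ 0, and suppose g ∈ H satisfies c₁‖g‖ ≤ ‖∇E(u)‖ ≤ c₂‖g‖ with 0 < c₁ ≤ c₂ and ⟨∇E(u), g⟩ ≥ c₃‖g‖·‖∇E(u)‖ with c₃ > 0. If 0 < τ < 2c₃c₁²/(c₂β), then E(u − τ·g) − E(u*) < E(u) − E(u*); that is, the step u ↦ u − τg strictly decreases the energy. -/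

import Mathlib

open scoped RealInnerProductSpace

lemma descent_aux {H : Type*} [NormedAddCommGroup H] [InnerProductSpace ℝ H] [CompleteSpace H]
    (E : H → ℝ) (E' : H → H) (β : ℝ) (hβ : 0 < β)
    (hgrad : ∀ x, HasGradientAt E (E' x) x)
    (hsmooth : ∀ u u' : H, ‖E' u - E' u'‖ ≤ β * ‖u - u'‖)
    (u d : H) : E (u + d) ≤ E u + ⟪E' u, d⟫ + β / 2 * ‖d‖ ^ 2 := by
  set ψ : ℝ → ℝ := fun t => E (u + t • d) - t * ⟪E' u, d⟫ - β / 2 * t ^ 2 * ‖d‖ ^ 2 with hψ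
  have hline : ∀ t : ℝ, HasDerivAt (fun t : ℝ => u + t • d) d t := fun t => by
    simpa using ((hasDerivAt_id t).smul_const d).const_add u
  have hder : ∀ t : ℝ, HasDerivAt ψ
      (⟪E' (u + t • d), d⟫ - ⟪E' u, d⟫ - β * t * ‖d‖ ^ 2) t := by
    intro t
    have h1 : HasDerivAt (fun t : ℝ => E (u + t • d)) (⟪E' (u + t • d), d⟫) t := by
      have := ((hgrad (u + t • d)).hasFDerivAt).comp_hasDerivAt t (hline t)
      simp [InnerProductSpace.toDual_apply_apply] at this
      exact this
    have h2 : HasDerivAt (fun t : ℝ => t * ⟪E' u, d⟫) (⟪E' u, d⟫) t := by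
      simpa using (hasDerivAt_id t).mul_const (⟪E' u, d⟫)
    have h3 : HasDerivAt (fun t : ℝ => β / 2 * t ^ 2 * ‖d‖ ^ 2) (β * t * ‖d‖ ^ 2) t := by
      have := ((hasDerivAt_pow 2 t).const_mul (β / 2)).mul_const (‖d‖ ^ 2)
      exact this.congr_deriv (by push_cast; ring)
    exact (h1.sub h2).sub h3
  have hmono : AntitoneOn ψ (Set.Icc 0 1) := by
    apply antitoneOn_of_deriv_nonpos (convex_Icc 0 1)
    · exact fun t _ => ((hder t).continuousAt).continuousWithinAt
    · exact fun t _ => ((hder t).differentiableAt).differentiableWithinAt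
    · intro t ht
      rw [interior_Icc] at ht
      rw [(hder t).deriv]
      have h1 : ⟪E' (u + t • d) - E' u, d⟫ ≤ ‖E' (u + t • d) - E' u‖ * ‖d‖ :=
        real_inner_le_norm _ _
      have h2 : ‖E' (u + t • d) - E' u‖ ≤ β * ‖t • d‖ := by
        simpa using hsmooth (u + t • d) u
      have h3 : ‖t • d‖ = t * ‖d‖ := by
        rw [norm_smul, Real.norm_eq_abs, abs_of_pos ht.1]
      rw [inner_sub_left] at h1
      rw [h3] at h2
      have h4 := mul_le_mul_of_nonneg_right h2 (norm_nonneg d)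
      have h5 : β * (t * ‖d‖) * ‖d‖ = β * t * ‖d‖ ^ 2 := by ring
      linarith
  have := hmono (Set.left_mem_Icc.2 zero_le_one) (Set.right_mem_Icc.2 zero_le_one) zero_le_one
  simp only [hψ, zero_smul, one_smul, add_zero, zero_mul, zero_pow, mul_zero, sub_zero,
    one_mul, one_pow, mul_one] at this
  linarith

/-- strict energy decrease for a step along a perturbed gradient direction `g`,
for step sizes `0 < τ < 2c₃c₁²/(c₂β)`. -/
theorem stmt2 {H : Type*} [NormedAddCommGroup H] [InnerProductSpace ℝ H] [CompleteSpace H]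
    (E : H → ℝ) (E' : H → H) (α β : ℝ) (hα : 0 < α) (hβ : 0 < β)
    (hgrad : ∀ x, HasGradientAt E (E' x) x)
    (hconv : ∀ u v : H, E u + ⟪E' u, v - u⟫ + (α / 2) * ‖u - v‖ ^ 2 ≤ E v)
    (hsmooth : ∀ u u' : H, ‖E' u - E' u'‖ ≤ β * ‖u - u'‖)
    (ustar : H) (hmin : ∀ v, E ustar ≤ E v)
    (u : H) (hEu : E ustar < E u) (hu : E' u ≠ 0) (g : H) (c₁ c₂ c₃ : ℝ)
    (hc₁ : 0 < c₁) (hc₁₂ : c₁ ≤ c₂)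
    (hlow : c₁ * ‖g‖ ≤ ‖E' u‖) (hup : ‖E' u‖ ≤ c₂ * ‖g‖)
    (hc₃ : 0 < c₃) (halign : c₃ * ‖g‖ * ‖E' u‖ ≤ ⟪E' u, g⟫)
    (τ : ℝ) (hτ0 : 0 < τ) (hτ : τ < 2 * c₃ * c₁ ^ 2 / (c₂ * β)) :
    E (u - τ • g) - E ustar < E u - E ustar := by
  have hg : g ≠ 0 := by
    rintro rfl
    simp only [norm_zero, mul_zero] at hup
    exact hu (norm_le_zero_iff.1 hup)
  have hgn : 0 < ‖g‖ := norm_pos_iff.2 hg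
  have hkey := descent_aux E E' β hβ hgrad hsmooth u (-(τ • g))
  rw [← sub_eq_add_neg] at hkey
  have hinner : ⟪E' u, -(τ • g)⟫ = -(τ * ⟪E' u, g⟫) := by
    rw [inner_neg_right, real_inner_smul_right]
  have hnorm : ‖-(τ • g)‖ ^ 2 = τ ^ 2 * ‖g‖ ^ 2 := by
    rw [norm_neg, norm_smul, Real.norm_eq_abs, abs_of_pos hτ0, mul_pow]
  rw [hinner, hnorm] at hkey
  have hc₂ : 0 < c₂ := lt_of_lt_of_le hc₁ hc₁₂
  have hτ' : τ * (c₂ * β) < 2 * c₃ * c₁ ^ 2 :=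
    (lt_div_iff₀ (by positivity)).1 hτ
  have hEg : c₁ * ‖g‖ ≤ ‖E' u‖ := hlow
  have halign' : c₃ * c₁ * ‖g‖ ^ 2 ≤ ⟪E' u, g⟫ := by
    nlinarith [mul_le_mul_of_nonneg_left hlow (mul_pos hc₃ hgn).le]
  -- want: β/2 * τ^2 * ‖g‖^2 < τ * ⟪E' u, g⟫
  have hfinal : β / 2 * (τ ^ 2 * ‖g‖ ^ 2) < τ * ⟪E' u, g⟫ := by
    have h1 : β * τ / 2 * ‖g‖ ^ 2 < c₃ * c₁ * ‖g‖ ^ 2 := by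
      have : β * τ / 2 < c₃ * c₁ := by
        nlinarith [mul_nonneg (mul_pos hc₃ hc₁).le (sub_nonneg.2 hc₁₂)]
      exact mul_lt_mul_of_pos_right this (by positivity)
    have h2 : c₃ * c₁ * ‖g‖ ^ 2 ≤ ⟪E' u, g⟫ := halign'
    calc β / 2 * (τ ^ 2 * ‖g‖ ^ 2) = τ * (β * τ / 2 * ‖g‖ ^ 2) := by ring
    _ < τ * ⟪E' u, g⟫ := by
        apply mul_lt_mul_of_pos_left _ hτ0
        linarith
  linarith
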